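/- Let N ≥ 1, let R, T be the shift and twist matrices on ZMod N, and let F : Matrix (ZMod N) (ZMod N) ℂ be a unitary matrix satisfying the Fourier relations F * R = T * F and F * T = Rᴴ * F. Then F is a scalar multiple of the discrete Fourier transform matrix: there exists c : ℂ with ‖c‖ = 1 such that F = c • 𝓕, where 𝓕 j k = exp(2πi·j.val·k.val/N)/√N. -/

import Mathlib

open Matrix Complex

/-- The shift matrix `R` on `ℂ^(ZMod N)`: `R j k = 1` iff `j = k + 1`. -/
noncomputable def shiftM (N : ℕ) [NeZero N] : Matrix (ZMod N) (ZMod N) ℂ :=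
  fun j k => if j = k + 1 then 1 else 0

/-- The twist matrix `T` on `ℂ^(ZMod N)`: diagonal with entries `exp(2πi j/N)`. -/
noncomputable def twistM (N : ℕ) [NeZero N] : Matrix (ZMod N) (ZMod N) ℂ :=
  fun j k => if j = k then Complex.exp (2 * Real.pi * Complex.I * j.val / N) else 0

/-- The discrete Fourier transform matrix `𝓕 j k = exp(2πi jk/N)/√N`. -/
noncomputable def dftM (N : ℕ) [NeZero N] : Matrix (ZMod N) (ZMod N) ℂ :=
  fun j k => Complex.exp (2 * Real.pi * Complex.I * (j.val * k.val) / N) / Real.sqrt N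

/-- A unitary intertwining `R ↦ T` and `T ↦ R⁻¹` is a phase times the Fourier matrix. -/
theorem stmt_11 (N : ℕ) [NeZero N] (hN : 1 ≤ N) (F : Matrix (ZMod N) (ZMod N) ℂ)
    (hU : Fᴴ * F = 1) (hR : F * shiftM N = twistM N * F)
    (hT : F * twistM N = (shiftM N)ᴴ * F) :
    ∃ c : ℂ, ‖c‖ = 1 ∧ F = c • dftM N := by
  set e : ZMod N → ℂ := fun j => Complex.exp (2 * Real.pi * Complex.I * j.val / N) with he
  -- entrywise form of the relations
  have h1 : ∀ j k : ZMod N, F j (k + 1) = e j * F j k := by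
    intro j k
    have := congrFun (congrFun hR j) k
    simpa [Matrix.mul_apply, shiftM, twistM, he, eq_comm] using this
  have h2 : ∀ j k : ZMod N, F (j + 1) k = e k * F j k := by
    intro j k
    have := congrFun (congrFun hT j) k
    simpa [Matrix.mul_apply, shiftM, twistM, conjTranspose_apply, he, mul_comm] using this.symm
  have he0 : e 0 = 1 := by simp [he]
  set c : ℂ := F 0 0 with hc
  have hcol : ∀ n : ℕ, F (n : ZMod N) 0 = c := by
    intro n
    induction n with
    | zero => simp [hc]
    | succ n ih => rw [Nat.cast_succ, h2, he0, one_mul, ih]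
  have hcolall : ∀ j : ZMod N, F j 0 = c := by
    intro j
    have := hcol j.val
    rwa [ZMod.natCast_val, ZMod.cast_id] at this
  have hrow : ∀ (j : ZMod N) (n : ℕ), F j (n : ZMod N) = e j ^ n * c := by
    intro j n
    induction n with
    | zero => simpa using hcolall j
    | succ n ih => rw [Nat.cast_succ, h1, ih, pow_succ]; ring
  have hent : ∀ j k : ZMod N,
      F j k = c * Complex.exp (2 * Real.pi * Complex.I * (j.val * k.val) / N) := by
    intro j k
    have := hrow j k.val
    rw [ZMod.natCast_val, ZMod.cast_id] at this
    rw [this, he]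
    rw [← Complex.exp_nat_mul]
    rw [mul_comm]
    congr 1
    push_cast
    ring
  -- unitarity pins down |c|
  have hN0 : (0 : ℝ) < N := by exact_mod_cast Nat.pos_of_ne_zero (NeZero.ne N)
  have hu := congrFun (congrFun hU 0) 0
  rw [Matrix.mul_apply] at hu
  have hsum : ∀ j : ZMod N, Fᴴ 0 j * F j 0 = (Complex.normSq c : ℂ) := by
    intro j
    rw [conjTranspose_apply, hcolall j, Complex.normSq_eq_conj_mul_self]
    rfl
  rw [Finset.sum_congr rfl (fun j _ => hsum j)] at hu
  simp only [Finset.sum_const, Finset.card_univ, ZMod.card, nsmul_eq_mul,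
    Matrix.one_apply_eq] at hu
  have hnsq : (N : ℝ) * Complex.normSq c = 1 := by exact_mod_cast hu
  refine ⟨c * Real.sqrt N, ?_, ?_⟩
  · have : ‖c * (Real.sqrt N : ℂ)‖ ^ 2 = 1 := by
      rw [norm_mul]
      rw [mul_pow, Complex.sq_norm]
      have : ‖((Real.sqrt N : ℝ) : ℂ)‖ = Real.sqrt N := by
        simp [Real.sqrt_nonneg]
      rw [this, Real.sq_sqrt hN0.le]
      rw [mul_comm]; exact hnsq
    nlinarith [norm_nonneg (c * (Real.sqrt N : ℂ))]
  · ext j k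
    rw [hent j k]
    have hs : (Real.sqrt N : ℂ) ≠ 0 := by
      simp [Real.sqrt_eq_zero', not_le, hN0, hN0.ne']
    simp only [dftM, Matrix.smul_apply, smul_eq_mul]
    field_simp
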